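/- arXiv:1111.1680 — 2 statements merged into one kernel-verified Lean document; each statement's English description precedes it below -/
import Mathlib

section
/- For 0 < α < 2, the function X_α integrates to 1 over the real line, i.e., ∫_{−∞}^{∞} X_α(y) dy = 1, so X_α is a probability density on ℝ. -/
open Real MeasureTheory Set

lemma integral_aux_arctan (c s : ℝ) (hs : 0 < s) :
    ∫ u in Set.Ioi (0:ℝ), ((u + c) ^ 2 + s ^ 2)⁻¹
      = (π / 2 - Real.arctan (c / s)) / s := by
  have hs' : s ≠ 0 := hs.ne'
  have hF : ∀ x ∈ Set.Ici (0:ℝ),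
      HasDerivAt (fun u => s⁻¹ * Real.arctan ((u + c) / s)) (((x + c) ^ 2 + s ^ 2)⁻¹) x := by
    intro x _
    have h1 : HasDerivAt (fun u : ℝ => (u + c) / s) (1 / s) x := by
      simpa using ((hasDerivAt_id x).add_const c).div_const s
    have h2 := (Real.hasDerivAt_arctan ((x + c) / s)).comp x h1
    have h3 := h2.const_mul s⁻¹
    refine h3.congr_deriv ?_
    have hpos : (0:ℝ) < (x + c) ^ 2 + s ^ 2 := by positivity
    field_simp
    ring
  have htends : Filter.Tendsto (fun u : ℝ => s⁻¹ * Real.arctan ((u + c) / s))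
      Filter.atTop (nhds (s⁻¹ * (π / 2))) := by
    have h1 : Filter.Tendsto (fun u : ℝ => (u + c) / s) Filter.atTop Filter.atTop := by
      apply Filter.Tendsto.atTop_div_const hs
      exact Filter.tendsto_atTop_add_const_right _ c Filter.tendsto_id
    exact ((Real.tendsto_arctan_atTop.mono_right nhdsWithin_le_nhds).comp h1).const_mul s⁻¹
  rw [integral_Ioi_of_hasDerivAt_of_nonneg' hF (fun x _ => by positivity) htends]
  rw [zero_add]
  field_simp

theorem X_alpha_integral_one (α : ℝ) (hα0 : 0 < α) (hα2 : α < 2) :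
    ∫ y : ℝ, (1 / π) * |y| ^ (α - 1) * Real.sin (α * π / 2) /
      (1 + 2 * |y| ^ α * Real.cos (α * π / 2) + |y| ^ (2 * α)) = 1 := by
  have hπ : (0:ℝ) < π := Real.pi_pos
  set θ : ℝ := α * π / 2 with hθdef
  have hθ0 : 0 < θ := by positivity
  have hθπ : θ < π := by
    rw [hθdef]
    nlinarith
  have hs : 0 < Real.sin θ := Real.sin_pos_of_pos_of_lt_pi hθ0 hθπ
  set s : ℝ := Real.sin θ
  set c : ℝ := Real.cos θ
  have hcs : c ^ 2 + s ^ 2 = 1 := Real.cos_sq_add_sin_sq θ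
  set F : ℝ → ℝ := fun x => (1 / π) * x ^ (α - 1) * s / (1 + 2 * x ^ α * c + x ^ (2 * α))
    with hF
  set g : ℝ → ℝ := fun u => s / (α * π) * ((u + c) ^ 2 + s ^ 2)⁻¹ with hg
  have step1 : (∫ y : ℝ, F |y|) = 2 * ∫ x in Set.Ioi (0:ℝ), F x :=
    integral_comp_abs (f := F)
  have step2 : (∫ x in Set.Ioi (0:ℝ), F x)
      = ∫ x in Set.Ioi (0:ℝ), (α * x ^ (α - 1)) • g (x ^ α) := by
    refine setIntegral_congr_fun measurableSet_Ioi (fun x hx => ?_)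
    have hx0 : (0:ℝ) < x := hx
    have hxa : (0:ℝ) < x ^ α := Real.rpow_pos_of_pos hx0 α
    have h2a : x ^ (2 * α) = (x ^ α) ^ 2 := by
      rw [two_mul, Real.rpow_add hx0, sq]
    have hden : 1 + 2 * x ^ α * c + x ^ (2 * α) = (x ^ α + c) ^ 2 + s ^ 2 := by
      rw [h2a]; nlinarith [hcs]
    have hdenpos : (0:ℝ) < (x ^ α + c) ^ 2 + s ^ 2 := by positivity
    rw [hF, hg]
    simp only [smul_eq_mul, hden]
    field_simp
  have step3 : (∫ x in Set.Ioi (0:ℝ), (α * x ^ (α - 1)) • g (x ^ α))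
      = ∫ u in Set.Ioi (0:ℝ), g u := integral_comp_rpow_Ioi_of_pos hα0
  have step4 : (∫ u in Set.Ioi (0:ℝ), g u)
      = s / (α * π) * ∫ u in Set.Ioi (0:ℝ), ((u + c) ^ 2 + s ^ 2)⁻¹ := by
    rw [hg, MeasureTheory.integral_const_mul]
  have harc : Real.arctan (c / s) = π / 2 - θ := by
    have h1 : c / s = Real.tan (π / 2 - θ) := by
      rw [Real.tan_eq_sin_div_cos, Real.sin_pi_div_two_sub, Real.cos_pi_div_two_sub]
    rw [h1, Real.arctan_tan (by linarith) (by linarith)]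
  have step5 : (∫ u in Set.Ioi (0:ℝ), ((u + c) ^ 2 + s ^ 2)⁻¹) = θ / s := by
    rw [integral_aux_arctan c s hs, harc]
    ring
  calc (∫ y : ℝ, (1 / π) * |y| ^ (α - 1) * Real.sin (α * π / 2) /
        (1 + 2 * |y| ^ α * Real.cos (α * π / 2) + |y| ^ (2 * α)))
      = ∫ y : ℝ, F |y| := rfl
    _ = 2 * ∫ x in Set.Ioi (0:ℝ), F x := step1
    _ = 2 * (s / (α * π) * (θ / s)) := by rw [step2, step3, step4, step5]
    _ = 1 := by
        rw [hθdef]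
        field_simp
end

section
/- If f : ℝ → ℝ is an even C¹ probability density that is unimodal with mode at 0 (i.e., f′(r) ≤ 0 for r > 0) and f(r), r f(r) → 0 at infinity, then F(x) := −f′(|x|)/(2π|x|) is a probability density on ℝ³: it is nonnegative and integrates to 1. -/
open Real MeasureTheory Filter

theorem radial_density_from_unimodal
    (f : ℝ → ℝ)
    (hf_even : ∀ r : ℝ, f (-r) = f r)
    (hf_smooth : ContDiffOn ℝ 1 f (Set.Ioi 0))
    (hf_mono : ∀ r : ℝ, 0 < r → deriv f r ≤ 0)
    (hf_decay : Tendsto f atTop (nhds 0))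
    (hf_decay' : Tendsto (fun r => r * f r) atTop (nhds 0))
    (hf_prob : ∫ r : ℝ, f r = 1)
    (F : EuclideanSpace ℝ (Fin 3) → ℝ)
    (hF : ∀ x : EuclideanSpace ℝ (Fin 3), x ≠ 0 →
      F x = -deriv f ‖x‖ / (2 * π * ‖x‖)) :
    (∀ x : EuclideanSpace ℝ (Fin 3), x ≠ 0 → 0 ≤ F x) ∧
    ∫ x : EuclideanSpace ℝ (Fin 3), F x = 1 := by
  -- f is integrable
  have hf_int : Integrable f := by
    by_contra h
    rw [integral_undef h] at hf_prob
    norm_num at hf_prob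
  -- differentiability facts
  have hderivf : ∀ x : ℝ, 0 < x → HasDerivAt f (deriv f x) x := by
    intro x hx
    have h1 : DifferentiableOn ℝ f (Set.Ioi 0) := hf_smooth.differentiableOn one_ne_zero
    exact ((h1 x hx).differentiableAt (Ioi_mem_nhds hx)).hasDerivAt
  have hf_cont : ContinuousOn f (Set.Ioi 0) := hf_smooth.continuousOn
  -- f is antitone on (0, ∞)
  have hf_anti : ∀ ⦃x y : ℝ⦄, 0 < x → x ≤ y → f y ≤ f x := by
    intro x y hx hxy
    have h := antitoneOn_of_deriv_nonpos (convex_Ioi (0:ℝ)) hf_cont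
      (by
        rw [interior_Ioi]
        exact fun z hz => ((hderivf z hz).differentiableAt).differentiableWithinAt)
      (by
        rw [interior_Ioi]
        exact fun z hz => hf_mono z hz)
    exact h (Set.mem_Ioi.2 hx) (Set.mem_Ioi.2 (lt_of_lt_of_le hx hxy)) hxy
  -- f is nonnegative on (0, ∞)
  have hf_nonneg : ∀ x : ℝ, 0 < x → 0 ≤ f x := by
    intro x hx
    refine le_of_tendsto hf_decay ?_
    filter_upwards [Filter.eventually_ge_atTop x] with y hy
    exact hf_anti hx hy
  -- the primitive of f
  set G : ℝ → ℝ := fun r => ∫ t in (0:ℝ)..r, f t with hG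
  have hG_cont : Continuous G := hf_int.continuous_primitive 0
  have hG_deriv : ∀ x : ℝ, 0 < x → HasDerivAt G (f x) x := by
    intro x hx
    exact intervalIntegral.integral_hasDerivAt_right hf_int.intervalIntegrable
      hf_int.aestronglyMeasurable.stronglyMeasurableAtFilter
      ((hf_cont x hx).continuousAt (Ioi_mem_nhds hx))
  have hG0 : G 0 = 0 := by simp [hG]
  -- ∫ on (0,∞) of f equals 1/2
  have half : ∫ t in Set.Ioi (0:ℝ), f t = 1/2 := by
    have hsplit : (∫ t in Set.Iic (0:ℝ), f t) + ∫ t in Set.Ioi (0:ℝ), f t = 1 := by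
      rw [intervalIntegral.integral_Iic_add_Ioi hf_int.integrableOn hf_int.integrableOn]
      exact hf_prob
    have heq : (∫ t in Set.Iic (0:ℝ), f t) = ∫ t in Set.Ioi (0:ℝ), f t := by
      have h1 := _root_.integral_comp_neg_Ioi (c := (0:ℝ)) (f := f)
      simp only [neg_zero] at h1
      rw [← h1]
      exact setIntegral_congr_fun measurableSet_Ioi (fun x _ => hf_even x)
    rw [heq] at hsplit
    linarith
  -- a bound used for r * f r → 0 as r → 0⁺
  have key_bound : ∀ r : ℝ, 0 < r → r * f r ≤ 2 * (G r - G (r/2)) := by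
    intro r hr
    have h2 : (0:ℝ) < r/2 := by linarith
    have hGdiff : G r - G (r/2) = ∫ t in Set.Ioc (r/2) r, f t := by
      rw [show G r - G (r/2) = ∫ t in (r/2)..r, f t from
        intervalIntegral.integral_interval_sub_left hf_int.intervalIntegrable
        hf_int.intervalIntegrable, intervalIntegral.integral_of_le (by linarith)]
    have hmono : ∫ _ in Set.Ioc (r/2) r, f r ≤ ∫ t in Set.Ioc (r/2) r, f t := by
      refine setIntegral_mono_on (integrableOn_const (by
        rw [Real.volume_Ioc]; exact ENNReal.ofReal_lt_top.ne)) hf_int.integrableOn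
        measurableSet_Ioc ?_
      intro t ht
      exact hf_anti (lt_trans h2 ht.1) ht.2
    have hconst : ∫ _ in Set.Ioc (r/2) r, f r = (r/2) * f r := by
      rw [setIntegral_const, measureReal_def, Real.volume_Ioc, ENNReal.toReal_ofReal (by linarith), smul_eq_mul]
      ring
    rw [hGdiff]
    nlinarith [hmono, hconst]
  -- r * f r → 0 as r → 0 within (0,∞)
  have hrf0 : Tendsto (fun r => r * f r) (nhdsWithin 0 (Set.Ici 0)) (nhds 0) := by
    have hub : Tendsto (fun r => 2 * (G r - G (r/2))) (nhdsWithin 0 (Set.Ici 0)) (nhds 0) := by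
      have h1 : Tendsto (fun r : ℝ => r/2) (nhds 0) (nhds 0) := by
        simpa using (tendsto_id (x := nhds (0:ℝ))).div_const 2
      have h2 : Tendsto (fun r => 2 * (G r - G (r/2))) (nhds 0) (nhds (2 * (G 0 - G 0))) :=
        tendsto_const_nhds.mul ((hG_cont.tendsto 0).sub ((hG_cont.tendsto 0).comp h1))
      simpa using h2.mono_left nhdsWithin_le_nhds
    refine tendsto_of_tendsto_of_tendsto_of_le_of_le' tendsto_const_nhds hub ?_ ?_
    · filter_upwards [self_mem_nhdsWithin] with r hr
      rcases (Set.mem_Ici.1 hr).eq_or_lt with h | h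
      · simp [← h]
      · exact mul_nonneg h.le (hf_nonneg r h)
    · filter_upwards [self_mem_nhdsWithin] with r hr
      rcases (Set.mem_Ici.1 hr).eq_or_lt with h | h
      · simp [← h]
      · exact key_bound r h
  -- the integrated-by-parts identity
  set g : ℝ → ℝ := fun r => G r - r * f r with hg
  set g' : ℝ → ℝ := fun x => -(x * deriv f x) with hg'
  have hcont0 : ContinuousWithinAt g (Set.Ici 0) 0 := by
    have : Tendsto g (nhdsWithin 0 (Set.Ici 0)) (nhds (G 0 - 0)) :=
      ((hG_cont.tendsto 0).mono_left nhdsWithin_le_nhds).sub hrf0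
    simpa [ContinuousWithinAt, hg, hG0] using this
  have hderivg : ∀ x ∈ Set.Ioi (0:ℝ), HasDerivAt g (g' x) x := by
    intro x hx
    have h1 : HasDerivAt (fun r => r * f r) (1 * f x + x * deriv f x) x :=
      (hasDerivAt_id x).mul (hderivf x hx)
    have h2 := (hG_deriv x hx).sub h1
    convert h2 using 1
    · rfl
    · rfl
    · rfl
    · simp [hg']
  have hg'pos : ∀ x ∈ Set.Ioi (0:ℝ), 0 ≤ g' x := by
    intro x hx
    have := hf_mono x hx
    have hx' : (0:ℝ) < x := hx
    simp only [hg', neg_nonneg]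
    exact mul_nonpos_of_nonneg_of_nonpos hx'.le this
  have hgtop : Tendsto g atTop (nhds (1/2)) := by
    have h1 : Tendsto G atTop (nhds (∫ t in Set.Ioi (0:ℝ), f t)) :=
      intervalIntegral_tendsto_integral_Ioi 0 hf_int.integrableOn tendsto_id
    rw [half] at h1
    simpa [hg] using h1.sub hf_decay'
  have hmain : ∫ x in Set.Ioi (0:ℝ), g' x = 1/2 := by
    rw [integral_Ioi_of_hasDerivAt_of_nonneg hcont0 hderivg hg'pos hgtop]
    simp [hg, hG0]
  have hint2 : IntegrableOn g' (Set.Ioi (0:ℝ)) :=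
    integrableOn_Ioi_deriv_of_nonneg hcont0 hderivg hg'pos hgtop
  -- now the 3-dimensional computation
  constructor
  · intro x hx
    rw [hF x hx]
    have hnorm : (0:ℝ) < ‖x‖ := norm_pos_iff.2 hx
    have := hf_mono ‖x‖ hnorm
    apply div_nonneg (by linarith) (by positivity)
  · set g₃ : ℝ → ℝ := fun r => -deriv f r / (2 * π * r) with hg₃
    have hae : F =ᵐ[volume] fun x => g₃ ‖x‖ := by
      have h0 : (∀ᵐ x : EuclideanSpace ℝ (Fin 3), x ≠ 0) := by
        rw [ae_iff]
        have : {x : EuclideanSpace ℝ (Fin 3) | ¬ x ≠ 0} = {0} := by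
          ext x; simp
        rw [this]
        exact measure_singleton 0
      filter_upwards [h0] with x hx
      exact hF x hx
    rw [integral_congr_ae hae]
    rw [integral_fun_norm_addHaar volume g₃]
    have hdim : Module.finrank ℝ (EuclideanSpace ℝ (Fin 3)) = 3 := finrank_euclideanSpace_fin
    rw [hdim]
    -- the radial integral
    have hrad : ∫ y in Set.Ioi (0:ℝ), y ^ (3-1) • g₃ y = 1 / (4 * π) := by
      have hcongr : ∀ y ∈ Set.Ioi (0:ℝ), y ^ (3-1) • g₃ y = (1 / (2*π)) * g' y := by
        intro y hy
        have hy' : (0:ℝ) < y := hy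
        have hπ : π ≠ 0 := pi_ne_zero
        simp only [hg₃, hg', smul_eq_mul]
        field_simp
        ring
      rw [setIntegral_congr_fun measurableSet_Ioi hcongr, integral_const_mul, hmain]
      field_simp
      ring
    rw [hrad]
    -- the volume of the unit ball
    have hball : (volume (Metric.ball (0 : EuclideanSpace ℝ (Fin 3)) 1)).toReal
        = 4 / 3 * π := by
      rw [EuclideanSpace.volume_ball]
      have hcard : Fintype.card (Fin 3) = 3 := by simp
      rw [hcard]
      have hcast : ((3:ℕ):ℝ)/2 + 1 = (3:ℝ)/2 + 1 := by norm_num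
      rw [hcast]
      have hΓ : Real.Gamma ((3:ℝ)/2 + 1) = 3/4 * Real.sqrt π := by
        rw [Real.Gamma_add_one (by norm_num)]
        have h32 : (3:ℝ)/2 = 1/2 + 1 := by norm_num
        rw [h32, Real.Gamma_add_one (by norm_num), Real.Gamma_one_half_eq]
        ring
      have hsqrt : Real.sqrt π ^ 3 = π * Real.sqrt π := by
        have := Real.sq_sqrt pi_pos.le
        nlinarith [Real.sqrt_nonneg π]
      have hsq : Real.sqrt π ≠ 0 := by positivity
      rw [hΓ, hsqrt, ENNReal.ofReal_one, one_pow, one_mul,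
        ENNReal.toReal_ofReal (by positivity)]
      field_simp
    rw [measureReal_def, hball]
    simp only [smul_eq_mul, nsmul_eq_mul]
    have hπ : π ≠ 0 := pi_ne_zero
    field_simp
    norm_num
end
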